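/- Fix λ > 0 and y > 0. For all t with 0 < t < y and all ρ with |ρ| < 1, the function χ_λ(ρ,t) = (λt/(e^{λt} - e^{-λt})) · ((e^{λy} + e^{-λy})/(e^{λ(y-ρt)} + e^{-λ(y-ρt)})) satisfies (1/2)·(λt/(1-e^{-2λt}))·e^{-λt(1-ρ)} < χ_λ(ρ,t) ≤ 2·(λt/(1-e^{-2λt}))·e^{-λt(1-ρ)}. -/

import Mathlib

set_option maxHeartbeats 1000000


/-- Lemma 2(a): pointwise bounds for `χ_λ(ρ,t)`. -/
theorem chi_pointwise_bounds (lam y : ℝ) (hlam : 0 < lam) (hy : 0 < y)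
    (t ρ : ℝ) (ht₀ : 0 < t) (hty : t < y) (hρ : |ρ| < 1) :
    (1 / 2) * (lam * t / (1 - Real.exp (-(2 * lam * t)))) * Real.exp (-(lam * t * (1 - ρ))) <
      (lam * t / (Real.exp (lam * t) - Real.exp (-(lam * t)))) *
        ((Real.exp (lam * y) + Real.exp (-(lam * y))) /
          (Real.exp (lam * (y - ρ * t)) + Real.exp (-(lam * (y - ρ * t))))) ∧
    (lam * t / (Real.exp (lam * t) - Real.exp (-(lam * t)))) *
        ((Real.exp (lam * y) + Real.exp (-(lam * y))) /
          (Real.exp (lam * (y - ρ * t)) + Real.exp (-(lam * (y - ρ * t))))) ≤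
      2 * (lam * t / (1 - Real.exp (-(2 * lam * t)))) * Real.exp (-(lam * t * (1 - ρ))) := by
  have hP : (1:ℝ) < Real.exp (lam * t) := Real.one_lt_exp_iff.mpr (by positivity)
  have hQ : (1:ℝ) < Real.exp (lam * y) := Real.one_lt_exp_iff.mpr (by positivity)
  have hS : (0:ℝ) < Real.exp (lam * (ρ * t)) := Real.exp_pos _
  have hrt : ρ * t < y := by
    have h1 : ρ * t ≤ |ρ| * t := by
      calc ρ * t ≤ |ρ * t| := le_abs_self _
        _ = |ρ| * t := by rw [abs_mul, abs_of_pos ht₀]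
    nlinarith
  have hSQ : Real.exp (lam * (ρ * t)) < Real.exp (lam * y) :=
    Real.exp_lt_exp.mpr (by nlinarith)
  set P := Real.exp (lam * t) with hPdef
  set Q := Real.exp (lam * y) with hQdef
  set S := Real.exp (lam * (ρ * t)) with hSdef
  have e1 : Real.exp (-(lam * t)) = P⁻¹ := by rw [Real.exp_neg]
  have e2 : Real.exp (-(lam * y)) = Q⁻¹ := by rw [Real.exp_neg]
  have e3 : Real.exp (lam * (y - ρ * t)) = Q / S := by
    rw [show lam * (y - ρ * t) = lam * y - lam * (ρ * t) by ring, Real.exp_sub]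
  have e4 : Real.exp (-(lam * (y - ρ * t))) = S / Q := by
    rw [Real.exp_neg, e3, inv_div]
  have e5 : Real.exp (-(2 * lam * t)) = (P * P)⁻¹ := by
    rw [Real.exp_neg, show 2 * lam * t = lam * t + lam * t by ring, Real.exp_add]
  have e6 : Real.exp (-(lam * t * (1 - ρ))) = S / P := by
    rw [Real.exp_neg, show lam * t * (1 - ρ) = lam * t - lam * (ρ * t) by ring,
      Real.exp_sub, inv_div]
  rw [e1, e2, e3, e4, e5, e6]
  have hP0 : (0:ℝ) < P := lt_trans one_pos hP
  have hQ0 : (0:ℝ) < Q := lt_trans one_pos hQ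
  have hK : (0:ℝ) < lam * t * P * S / (P ^ 2 - 1) := by
    apply div_pos (by positivity); nlinarith
  have hne1 : P - P⁻¹ ≠ 0 := by
    have : P⁻¹ < 1 := inv_lt_one_of_one_lt₀ hP
    nlinarith
  have hne2 : Q / S + S / Q ≠ 0 := by positivity
  have hne3 : P ^ 2 - 1 ≠ 0 := by nlinarith
  have hne4 : Q ^ 2 + S ^ 2 ≠ 0 := by positivity
  have hne5 : 1 - (P * P)⁻¹ ≠ 0 := by
    have : (P * P)⁻¹ < 1 := inv_lt_one_of_one_lt₀ (by nlinarith)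
    nlinarith
  have hχ : lam * t / (P - P⁻¹) * ((Q + Q⁻¹) / (Q / S + S / Q))
      = (lam * t * P * S / (P ^ 2 - 1)) * ((Q ^ 2 + 1) / (Q ^ 2 + S ^ 2)) := by
    rw [div_mul_div_comm, div_mul_div_comm,
      div_eq_div_iff (mul_ne_zero hne1 hne2) (mul_ne_zero hne3 hne4)]
    field_simp
  have hC : lam * t / (1 - (P * P)⁻¹) * (S / P)
      = lam * t * P * S / (P ^ 2 - 1) := by
    rw [div_mul_div_comm, div_eq_div_iff (mul_ne_zero hne5 hP0.ne') hne3]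
    field_simp
  constructor
  · calc (1:ℝ) / 2 * (lam * t / (1 - (P * P)⁻¹)) * (S / P)
        = (lam * t * P * S / (P ^ 2 - 1)) * (1 / 2) := by
          rw [← hC]; ring
      _ < (lam * t * P * S / (P ^ 2 - 1)) * ((Q ^ 2 + 1) / (Q ^ 2 + S ^ 2)) := by
          apply mul_lt_mul_of_pos_left _ hK
          rw [div_lt_div_iff₀ (by norm_num) (by positivity)]
          nlinarith
      _ = lam * t / (P - P⁻¹) * ((Q + Q⁻¹) / (Q / S + S / Q)) := hχ.symm
  · calc lam * t / (P - P⁻¹) * ((Q + Q⁻¹) / (Q / S + S / Q))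
        = (lam * t * P * S / (P ^ 2 - 1)) * ((Q ^ 2 + 1) / (Q ^ 2 + S ^ 2)) := hχ
      _ ≤ (lam * t * P * S / (P ^ 2 - 1)) * 2 := by
          apply mul_le_mul_of_nonneg_left _ hK.le
          rw [div_le_iff₀ (by positivity)]
          nlinarith
      _ = 2 * (lam * t / (1 - (P * P)⁻¹)) * (S / P) := by
          rw [← hC]; ring
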